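/- Let m be a lawful monad on types, A a type (the alphabet), and β : m Bool → Bool an Eilenberg–Moore algebra for m (β (pure b) = b and β (joinM t) = β (β <$> t)). For each type X define λ_X : m (Bool × (A → X)) → Bool × (A → m X) by λ_X t = (β (Prod.fst <$> t), fun a => (fun p => p.2 a) <$> t). Then λ is a distributive law of the monad m over the functor D X = Bool × (A → X): (i) λ is natural, i.e. for every f : X → Y and t : m (Bool × (A → X)), λ_Y ((fun p => (p.1, f ∘ p.2)) <$> t) = (fun q => (q.1, fun a => f <$> q.2 a)) (λ_X t); (ii) λ_X (pure d) = (d.1, fun a => pure (d.2 a)) for every d : Bool × (A → X); (iii) λ_X (joinM t) = ((λ_{m X} (λ_X <$> t)).1, fun a => joinM ((λ_{m X} (λ_X <$> t)).2 a)) for every t : m (m (Bool × (A → X))). -/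
import Mathlib


/-- The distributive law `λ_X : m (Bool × (A → X)) → Bool × (A → m X)` arising from an
algebra `β : m Bool → Bool`. -/
def autDistLaw {m : Type → Type} [Monad m] (β : m Bool → Bool) {A X : Type}
    (t : m (Bool × (A → X))) : Bool × (A → m X) :=
  (β (Prod.fst <$> t), fun a => (fun p => p.2 a) <$> t)

/-- The family `autDistLaw` is a distributive law of the monad `m` over the
deterministic-automaton functor `D X = Bool × (A → X)`: it is natural, compatible with
the unit of `m`, and compatible with the multiplication of `m`. -/
theorem autDistLaw_isDistributiveLaw {m : Type → Type} [Monad m] [LawfulMonad m]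
    (β : m Bool → Bool)
    (hβη : ∀ b : Bool, β (pure b) = b)
    (hβμ : ∀ t : m (m Bool), β (joinM t) = β (β <$> t))
    (A : Type) :
    (∀ (X Y : Type) (f : X → Y) (t : m (Bool × (A → X))),
      autDistLaw β ((fun p => (p.1, f ∘ p.2)) <$> t)
        = ((fun q : Bool × (A → m X) => (q.1, fun a => f <$> q.2 a)) (autDistLaw β t))) ∧
    (∀ (X : Type) (d : Bool × (A → X)),
      autDistLaw β (pure d) = (d.1, fun a => pure (d.2 a))) ∧
    (∀ (X : Type) (t : m (m (Bool × (A → X)))),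
      autDistLaw β (joinM t)
        = ((autDistLaw β (autDistLaw β <$> t)).1,
            fun a => joinM ((autDistLaw β (autDistLaw β <$> t)).2 a))) := by
  refine ⟨fun X Y f t => ?_, fun X d => ?_, fun X t => ?_⟩
  · simp [autDistLaw, Function.comp_def]
  · simp [autDistLaw, hβη]
  · have h1 : (Prod.fst <$> joinM t : m Bool) = joinM ((fun s => Prod.fst <$> s) <$> t) := by
      rw [joinM_map_map]
    have h2 : ∀ a : A, ((fun p : Bool × (A → X) => p.2 a) <$> joinM t)
        = joinM ((fun s => (fun p : Bool × (A → X) => p.2 a) <$> s) <$> t) := by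
      intro a; rw [joinM_map_map]
    simp only [autDistLaw, h1, h2, hβμ, Functor.map_map, Function.comp_def]
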